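/- Let 1 < p < ∞ and r, s be nonzero real numbers. The operator B(r,s) on l_p, defined by (B(r,s)x)_n = s x_{n-1} + r x_n (with x_{-1} := 0), is a bounded linear operator whose operator norm satisfies (|r|^p + |s|^p)^{1/p} ≤ ‖B(r,s)‖ ≤ |r| + |s|. -/

import Mathlib

open scoped ENNReal

noncomputable def shiftFun (x : ℕ → ℂ) : ℕ → ℂ := fun n => match n with
  | 0 => 0
  | Nat.succ m => x m

/-- For `1 < p < ∞` and nonzero reals `r, s`, the generalized difference
operator `B(r,s)`, acting on `l_p` by `(B(r,s)x)_n = s x_{n-1} + r x_n` (with `x_{-1} := 0`),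
is a bounded linear operator whose operator norm satisfies
`(|r|^p + |s|^p)^{1/p} ≤ ‖B(r,s)‖ ≤ |r| + |s|`. -/
theorem stmt1 (p : ℝ≥0∞) [Fact (1 ≤ p)] (hp1 : 1 < p) (hpt : p ≠ ⊤)
    (r s : ℝ) (hr : r ≠ 0) (hs : s ≠ 0) :
    ∃ T : lp (fun _ : ℕ => ℂ) p →L[ℂ] lp (fun _ : ℕ => ℂ) p,
      (∀ x : lp (fun _ : ℕ => ℂ) p,
        (T x : ∀ _ : ℕ, ℂ) 0 = (r : ℂ) * (x : ∀ _ : ℕ, ℂ) 0 ∧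
        ∀ n : ℕ, (T x : ∀ _ : ℕ, ℂ) (n + 1)
          = (s : ℂ) * (x : ∀ _ : ℕ, ℂ) n + (r : ℂ) * (x : ∀ _ : ℕ, ℂ) (n + 1)) ∧
      (|r| ^ p.toReal + |s| ^ p.toReal) ^ (1 / p.toReal) ≤ ‖T‖ ∧ ‖T‖ ≤ |r| + |s| := by
  have hp0 : 0 < p.toReal := ENNReal.toReal_pos (zero_lt_one.trans hp1).ne' hpt
  -- shift memℓp
  have hmem : ∀ x : lp (fun _ : ℕ => ℂ) p, Memℓp (shiftFun x) p := by
    intro x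
    apply memℓp_gen
    rw [← summable_nat_add_iff 1]
    have : (fun n => ‖shiftFun x (n + 1)‖ ^ p.toReal) = fun n => ‖(x : ∀ _ : ℕ, ℂ) n‖ ^ p.toReal := rfl
    rw [this]
    exact ((lp.memℓp x).summable hp0)
  -- shift as linear map
  let S : lp (fun _ : ℕ => ℂ) p →ₗ[ℂ] lp (fun _ : ℕ => ℂ) p :=
    { toFun := fun x => ⟨shiftFun x, hmem x⟩
      map_add' := by
        intro x y
        apply lp.ext
        funext n
        cases n with
        | zero => simp [shiftFun, lp.coeFn_add, Pi.add_apply]; exact (add_zero (0:ℂ)).symm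
        | succ m => simp [shiftFun, lp.coeFn_add, Pi.add_apply]; rfl
      map_smul' := by
        intro c x
        apply lp.ext
        funext n
        cases n with
        | zero => simp [shiftFun, lp.coeFn_smul]
        | succ m => simp [shiftFun, lp.coeFn_smul] }
  have hSnorm : ∀ x, ‖S x‖ = ‖x‖ := by
    intro x
    rw [lp.norm_eq_tsum_rpow hp0, lp.norm_eq_tsum_rpow hp0]
    congr 1
    have hsum : Summable (fun n => ‖(S x : ∀ _ : ℕ, ℂ) n‖ ^ p.toReal) := ((hmem x).summable hp0)
    rw [Summable.tsum_eq_zero_add hsum]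
    have h0 : ‖(S x : ∀ _ : ℕ, ℂ) 0‖ ^ p.toReal = 0 := by
      show ‖(0 : ℂ)‖ ^ p.toReal = 0
      simp [Real.zero_rpow hp0.ne']
    rw [h0, zero_add]
    rfl
  let Tlin : lp (fun _ : ℕ => ℂ) p →ₗ[ℂ] lp (fun _ : ℕ => ℂ) p :=
    (r : ℂ) • LinearMap.id + (s : ℂ) • S
  have hbound : ∀ x, ‖Tlin x‖ ≤ (|r| + |s|) * ‖x‖ := by
    intro x
    have : Tlin x = (r : ℂ) • x + (s : ℂ) • S x := rfl
    rw [this]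
    calc ‖(r : ℂ) • x + (s : ℂ) • S x‖ ≤ ‖(r : ℂ) • x‖ + ‖(s : ℂ) • S x‖ := norm_add_le _ _
    _ = |r| * ‖x‖ + |s| * ‖x‖ := by
        rw [norm_smul, norm_smul, hSnorm, Complex.norm_real, Complex.norm_real,
          Real.norm_eq_abs, Real.norm_eq_abs]
    _ = (|r| + |s|) * ‖x‖ := by ring
  let T : lp (fun _ : ℕ => ℂ) p →L[ℂ] lp (fun _ : ℕ => ℂ) p :=
    Tlin.mkContinuous (|r| + |s|) hbound
  have hTapp : ∀ (x : lp (fun _ : ℕ => ℂ) p) (n : ℕ),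
      (T x : ∀ _ : ℕ, ℂ) n = (r : ℂ) * (x : ∀ _ : ℕ, ℂ) n + (s : ℂ) * shiftFun x n := by
    intro x n
    show ((r : ℂ) • x + (s : ℂ) • S x : lp (fun _ : ℕ => ℂ) p) n = _
    rw [lp.coeFn_add, lp.coeFn_smul, lp.coeFn_smul]
    have hS : (S x : ∀ _ : ℕ, ℂ) n = shiftFun x n := rfl
    simp only [Pi.add_apply, Pi.smul_apply, smul_eq_mul, hS]
  refine ⟨T, fun x => ⟨?_, fun n => ?_⟩, ?_, ?_⟩
  · rw [hTapp]; simp [shiftFun]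
  · rw [hTapp]
    have : shiftFun x (n + 1) = (x : ∀ _ : ℕ, ℂ) n := rfl
    rw [this]; ring
  · -- lower bound
    set v : lp (fun _ : ℕ => ℂ) p := lp.single p 0 (1 : ℂ) with hv
    have hvnorm : ‖v‖ = 1 := by
      have := lp.norm_single (E := fun _ : ℕ => ℂ) (zero_lt_one.trans hp1) 0 (1 : ℂ)
      simpa using this
    set g : ∀ _ : ℕ, ℂ := fun n => if n = 0 then (r : ℂ) else if n = 1 then (s : ℂ) else 0 with hg
    have hTv : T v = ∑ i ∈ ({0, 1} : Finset ℕ), lp.single p i (g i) := by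
      apply lp.ext
      funext n
      rw [Finset.sum_pair (by norm_num : (0:ℕ) ≠ 1)]
      rw [hTapp]
      rw [lp.coeFn_add]
      match n with
      | 0 => simp [shiftFun, lp.single_apply_self, lp.single_apply_ne, hv, hg]
      | 1 => simp [shiftFun, lp.single_apply_self, lp.single_apply_ne, hv, hg,
              lp.single_apply]
      | (m+2) => simp [shiftFun, lp.single_apply_ne, hv, hg, lp.single_apply]
    have hTvnorm : ‖T v‖ ^ p.toReal = |r| ^ p.toReal + |s| ^ p.toReal := by
      rw [hTv, lp.norm_sum_single hp0 g ({0,1} : Finset ℕ),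
        Finset.sum_pair (by norm_num : (0:ℕ) ≠ 1)]
      simp [hg, Complex.norm_real]
    have hle : ‖T v‖ ≤ ‖T‖ := by
      calc ‖T v‖ ≤ ‖T‖ * ‖v‖ := T.le_opNorm v
      _ = ‖T‖ := by rw [hvnorm, mul_one]
    have : (|r| ^ p.toReal + |s| ^ p.toReal) ^ (1 / p.toReal) = ‖T v‖ := by
      rw [← hTvnorm, ← Real.rpow_mul (norm_nonneg _), mul_one_div, div_self hp0.ne',
        Real.rpow_one]
    rw [this]; exact hle
  · exact Tlin.mkContinuous_norm_le (by positivity) hbound
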